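/- For a positive integer k and the sets A_k, B_k, the reflection map x ↦ 2^k − 1 − x maps A_k onto A_k and B_k onto B_k if k is even, and maps A_k onto B_k and B_k onto A_k if k is odd. -/

import Mathlib

open Set

/-- R S n: number of pairs (s,s') with s,s' ∈ S, s < s', s+s' = n. -/
noncomputable def R (S : Set ℕ) (n : ℕ) : ℕ :=
  {p : ℕ × ℕ | p.1 ∈ S ∧ p.2 ∈ S ∧ p.1 < p.2 ∧ p.1 + p.2 = n}.ncard

/-- Thue–Morse set: nonnegative integers with an even number of binary 1's. -/
def A : Set ℕ := {n | Even ((Nat.digits 2 n).count 1)}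

def B : Set ℕ := Aᶜ

def Al (k : ℕ) : Set ℕ := A ∩ Set.Icc 0 (2 ^ k - 1)

def Bl (k : ℕ) : Set ℕ := B ∩ Set.Icc 0 (2 ^ k - 1)

lemma count1_two_mul (n : ℕ) :
    ((Nat.digits 2 (2 * n)).count 1) = (Nat.digits 2 n).count 1 := by
  rcases Nat.eq_zero_or_pos n with h | h
  · simp [h]
  · rw [Nat.digits_def' (by norm_num : 1 < 2) (by omega : 0 < 2 * n)]
    have h1 : 2 * n % 2 = 0 := by omega
    have h2 : 2 * n / 2 = n := by omega
    rw [h1, h2]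
    simp

lemma count1_two_mul_add_one (n : ℕ) :
    ((Nat.digits 2 (2 * n + 1)).count 1) = (Nat.digits 2 n).count 1 + 1 := by
  rw [Nat.digits_def' (by norm_num : 1 < 2) (by omega : 0 < 2 * n + 1)]
  have h1 : (2 * n + 1) % 2 = 1 := by omega
  have h2 : (2 * n + 1) / 2 = n := by omega
  rw [h1, h2]
  simp [add_comm]

lemma key (k : ℕ) : ∀ x, x < 2 ^ k →
    (Nat.digits 2 x).count 1 + (Nat.digits 2 (2 ^ k - 1 - x)).count 1 = k := by
  induction k with
  | zero => intro x hx; interval_cases x; simp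
  | succ k ih =>
    intro x hx
    have hm : 0 < 2 ^ k := Nat.pow_pos (by norm_num)
    have hx2 : x < 2 * 2 ^ k := by rw [pow_succ] at hx; omega
    set q := x / 2 with hq
    have hr : x % 2 = 0 ∨ x % 2 = 1 := by omega
    have hqlt : q < 2 ^ k := by omega
    have hiq := ih q hqlt
    rcases hr with hr | hr
    · -- x = 2q, complement = 2*(2^k-1-q)+1
      have hxe : x = 2 * q := by omega
      have hy : 2 ^ (k + 1) - 1 - x = 2 * (2 ^ k - 1 - q) + 1 := by
        rw [pow_succ]; omega
      rw [hxe] at hy ⊢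
      rw [hy, count1_two_mul, count1_two_mul_add_one]
      omega
    · have hxe : x = 2 * q + 1 := by omega
      have hy : 2 ^ (k + 1) - 1 - x = 2 * (2 ^ k - 1 - q) := by
        rw [pow_succ]; omega
      rw [hxe] at hy ⊢
      rw [hy, count1_two_mul_add_one, count1_two_mul]
      omega

lemma keyA (k x : ℕ) (hx : x < 2 ^ k) :
    (2 ^ k - 1 - x ∈ A ↔ (Even k ↔ x ∈ A)) := by
  have h := key k x hx
  have := Nat.even_add (m := (Nat.digits 2 x).count 1)
    (n := (Nat.digits 2 (2 ^ k - 1 - x)).count 1)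
  rw [h] at this
  simp only [A, Set.mem_setOf_eq]
  tauto

theorem stmt19 (k : ℕ) (hk : 0 < k) :
    (Even k →
      (fun x => 2 ^ k - 1 - x) '' Al k = Al k ∧ (fun x => 2 ^ k - 1 - x) '' Bl k = Bl k) ∧
    (Odd k →
      (fun x => 2 ^ k - 1 - x) '' Al k = Bl k ∧ (fun x => 2 ^ k - 1 - x) '' Bl k = Al k) := by
  have hm : 0 < 2 ^ k := Nat.pow_pos (by norm_num)
  have hlt : ∀ x : ℕ, x ≤ 2 ^ k - 1 → x < 2 ^ k := fun x hx => by omega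
  have hinv : ∀ x : ℕ, x ≤ 2 ^ k - 1 → 2 ^ k - 1 - (2 ^ k - 1 - x) = x := fun x hx => by omega
  have himg : ∀ S T : Set ℕ,
      (∀ x, x < 2 ^ k → ((2 ^ k - 1 - x ∈ T) ↔ x ∈ S)) →
      (∀ x, x < 2 ^ k → ((2 ^ k - 1 - x ∈ S) ↔ x ∈ T)) →
      (fun x => 2 ^ k - 1 - x) '' (S ∩ Set.Icc 0 (2 ^ k - 1)) = T ∩ Set.Icc 0 (2 ^ k - 1) := by
    intro S T hST hTS
    ext y
    simp only [Set.mem_image, Set.mem_inter_iff, Set.mem_Icc, Nat.zero_le, true_and]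
    constructor
    · rintro ⟨x, ⟨hxS, hxle⟩, rfl⟩
      exact ⟨(hST x (hlt x hxle)).2 hxS, by omega⟩
    · rintro ⟨hyT, hyle⟩
      refine ⟨2 ^ k - 1 - y, ⟨?_, by omega⟩, hinv y hyle⟩
      exact (hTS y (hlt y hyle)).2 hyT
  constructor
  · intro hke
    constructor
    · refine himg A A ?_ ?_ <;>
      · intro x hx
        rw [keyA k x hx]
        simp [hke]
    · refine himg B B ?_ ?_ <;>
      · intro x hx
        have := keyA k x hx
        simp only [B, Set.mem_compl_iff]
        tauto
  · intro hko
    have hke : ¬ Even k := Nat.not_even_iff_odd.mpr hko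
    constructor
    · refine himg A B ?_ ?_ <;>
      · intro x hx
        have := keyA k x hx
        simp only [B, Set.mem_compl_iff]
        tauto
    · refine himg B A ?_ ?_ <;>
      · intro x hx
        have := keyA k x hx
        simp only [B, Set.mem_compl_iff]
        tauto
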